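/- Let r ≥ 2 be an integer. If three vertices (i, m_i), (j, m_j), (k, m_k) of the graph G_r with levels 2 ≤ i ≤ j ≤ k ≤ r are pairwise adjacent in G_r (i.e., they form a triangle), then k − j ≤ j − i + 6. -/

import Mathlib

/-- Polar radius of the level-`k` vertices of the construction `G_r`. -/
noncomputable def rho (r k : ℕ) : ℝ :=
  Real.arsinh (Real.sinh (r : ℝ) / Real.sin (Real.pi / 2 ^ k))

/-- Polar angle of the `m`-th vertex of level `k`. -/
noncomputable def theta (k m : ℕ) : ℝ :=
  (2 * (m : ℝ) - 1) * Real.pi / 2 ^ k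

/-- Vertices of `G_r`: the root (`none`) together with pairs `(k, m)`. -/
abbrev Vertex : Type := Option (ℕ × ℕ)

/-- The pairs `(k, m)` with `2 ≤ k ≤ r` and `1 ≤ m ≤ 2^k` (together with the
root) are the actual vertices of `G_r`. -/
def ValidVertex (r : ℕ) : Vertex → Prop
  | none => True
  | some (k, m) => 2 ≤ k ∧ k ≤ r ∧ 1 ≤ m ∧ m ≤ 2 ^ k

/-- Two vertices represent points at hyperbolic distance at most `2r`
(expressed via the hyperbolic law of cosines). -/
def HypClose (r : ℕ) : Vertex → Vertex → Prop
  | none, none => False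
  | none, some (k, _) => rho r k ≤ 2 * (r : ℝ)
  | some (k, _), none => rho r k ≤ 2 * (r : ℝ)
  | some (k, m), some (k', m') =>
      Real.cosh (rho r k) * Real.cosh (rho r k') -
          Real.sinh (rho r k) * Real.sinh (rho r k') *
            Real.cos (theta k m - theta k' m') ≤ Real.cosh (2 * (r : ℝ))

/-- The hyperbolic uniform disk graph `G_r` of the construction: two distinct
vertices are adjacent iff the corresponding points have hyperbolic distance at
most `2r`. -/
def Gr (r : ℕ) : SimpleGraph Vertex where
  Adj u v := u ≠ v ∧ HypClose r u v
  symm := by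
    constructor
    rintro (_ | ⟨k, m⟩) (_ | ⟨k', m'⟩) ⟨hne, h⟩
    · exact ⟨hne.symm, h⟩
    · exact ⟨hne.symm, h⟩
    · exact ⟨hne.symm, h⟩
    · refine ⟨hne.symm, ?_⟩
      simp only [HypClose] at h ⊢
      have hc : Real.cos (theta k' m' - theta k m) = Real.cos (theta k m - theta k' m') := by
        rw [show theta k' m' - theta k m = -(theta k m - theta k' m') by ring, Real.cos_neg]
      have h1 : Real.cosh (rho r k') * Real.cosh (rho r k) =
          Real.cosh (rho r k) * Real.cosh (rho r k') := mul_comm _ _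
      have h2 : Real.sinh (rho r k') * Real.sinh (rho r k) =
          Real.sinh (rho r k) * Real.sinh (rho r k') := mul_comm _ _
      rw [hc, h1, h2]
      exact h
  loopless := by
    constructor
    rintro v ⟨hne, _⟩
    exact hne rfl

open Real


lemma sin_ge_helper {c x : ℝ} (hc0 : 0 < c) (hc : c ≤ π / 2) (hx : c ≤ x) (hx' : x ≤ π - c) :
    Real.sin c ≤ Real.sin x := by
  rcases le_total x (π / 2) with h | h
  · exact Real.sin_le_sin_of_le_of_le_pi_div_two (by linarith) h hx
  · rw [← Real.sin_pi_sub x]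
    exact Real.sin_le_sin_of_le_of_le_pi_div_two (by linarith) (by linarith) (by linarith)

lemma abs_sin_int_ge {n : ℕ} (hn : 2 ≤ n) {q : ℤ} (hq : ¬ ((n : ℤ) ∣ q)) :
    Real.sin (π / n) ≤ |Real.sin ((q : ℝ) * π / n)| := by
  have hn0 : (0 : ℝ) < n := by positivity
  have hb0 : q % n ≠ 0 := fun h => hq (Int.dvd_of_emod_eq_zero h)
  have hblt : q % (n:ℤ) < n := Int.emod_lt_of_pos q (by omega)
  have hbge : (0:ℤ) ≤ q % n := Int.emod_nonneg q (by omega)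
  set b : ℤ := q % n with hbdef
  have hqeq : q = n * (q / n) + b := (Int.mul_ediv_add_emod q n).symm
  have hqr : (q : ℝ) = (n : ℝ) * ((q / n : ℤ) : ℝ) + (b : ℝ) := by exact_mod_cast hqeq
  have key : (q : ℝ) * π / n = (b : ℝ) * π / n + (q / n : ℤ) * π := by
    rw [hqr]; field_simp; ring
  rw [key, Real.sin_add_int_mul_pi, abs_mul]
  have habs1 : |((-1 : ℝ)) ^ (q / (n:ℤ))| = 1 := by
    rcases Int.even_or_odd (q / (n:ℤ)) with he | ho
    · rw [he.neg_one_zpow, abs_one]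
    · rw [ho.neg_one_zpow, abs_neg, abs_one]
  rw [habs1, one_mul]
  have hb1 : (1 : ℤ) ≤ b := by omega
  have hble : b ≤ (n:ℤ) - 1 := by omega
  have hπn : π / n ≤ π / 2 := by
    apply div_le_div_of_nonneg_left pi_pos.le (by norm_num) (by exact_mod_cast hn)
  have h1 : π / n ≤ (b : ℝ) * π / n := by
    rw [div_le_div_iff₀ hn0 hn0]
    have hbr : (1 : ℝ) ≤ (b : ℝ) := by exact_mod_cast hb1
    nlinarith [pi_pos, hn0, mul_nonneg (mul_nonneg (sub_nonneg.2 hbr) pi_pos.le) hn0.le]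
  have h2 : (b : ℝ) * π / n ≤ π - π / n := by
    have hbr : (b : ℝ) ≤ (n : ℝ) - 1 := by exact_mod_cast hble
    rw [div_le_iff₀ hn0]
    have heq : (π - π / n) * n = n * π - π := by field_simp
    rw [heq]
    nlinarith [pi_pos]
  exact (sin_ge_helper (by positivity) hπn h1 h2).trans (le_abs_self _)


lemma sigma_pos {n : ℕ} (hn : 1 ≤ n) : 0 < Real.sin (π / 2 ^ n) := by
  apply Real.sin_pos_of_pos_of_lt_pi (by positivity)
  have h1 : (1:ℝ) < 2 ^ n := one_lt_pow₀ one_lt_two (by omega)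
  exact div_lt_self pi_pos h1

lemma adj_sin_sq {r a b : ℕ} (ma mb : ℕ) (hr : 1 ≤ r) (ha : 1 ≤ a) (hb : 1 ≤ b)
    (h : Real.cosh (rho r a) * Real.cosh (rho r b) -
          Real.sinh (rho r a) * Real.sinh (rho r b) *
            Real.cos (theta a ma - theta b mb) ≤ Real.cosh (2 * (r : ℝ))) :
    Real.sin ((theta a ma - theta b mb) / 2) ^ 2
      ≤ Real.sin (π / 2 ^ a) * Real.sin (π / 2 ^ b) := by
  set sa := Real.sin (π / 2 ^ a) with hsa_def
  set sb := Real.sin (π / 2 ^ b) with hsb_def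
  have hsa : 0 < sa := sigma_pos ha
  have hsb : 0 < sb := sigma_pos hb
  have hrpos : (0:ℝ) < (r:ℝ) := by exact_mod_cast Nat.pos_of_ne_zero (by omega)
  have hs : 0 < Real.sinh (r : ℝ) := by positivity
  have hsinha : Real.sinh (rho r a) = Real.sinh r / sa := Real.sinh_arsinh _
  have hsinhb : Real.sinh (rho r b) = Real.sinh r / sb := Real.sinh_arsinh _
  set P := Real.sinh (rho r a) * Real.sinh (rho r b) with hP_def
  have hP : P * (sa * sb) = Real.sinh (r:ℝ) ^ 2 := by
    rw [hP_def, hsinha, hsinhb]; field_simp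
  have hPpos : 0 < P := by
    have h1 : 0 < Real.sinh (r:ℝ) ^ 2 := by positivity
    nlinarith [mul_pos hsa hsb]
  set φ := theta a ma - theta b mb with hφ_def
  set S := Real.sin (φ / 2) ^ 2 with hS_def
  have hcos : Real.cos φ = 1 - 2 * S := by
    have h1 : φ = 2 * (φ / 2) := by ring
    rw [h1, Real.cos_two_mul', hS_def]
    have h2 := Real.sin_sq_add_cos_sq (φ / 2)
    nlinarith [h2]
  have hch2 : Real.cosh (2 * (r:ℝ)) = 2 * Real.sinh (r:ℝ) ^ 2 + 1 := by
    rw [Real.cosh_two_mul, Real.cosh_sq]; ring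
  have hsub : Real.cosh (rho r a) * Real.cosh (rho r b) - P
      = Real.cosh (rho r a - rho r b) := by
    rw [Real.cosh_sub, hP_def]
  have hone : (1:ℝ) ≤ Real.cosh (rho r a - rho r b) := Real.one_le_cosh _
  have key : P * S ≤ Real.sinh (r:ℝ) ^ 2 := by nlinarith [h, hcos, hch2, hsub, hone]
  have hfin : P * S ≤ P * (sa * sb) := by rw [hP]; exact key
  exact le_of_mul_le_mul_left hfin hPpos

lemma theta_sub {a b : ℕ} (hab : a ≤ b) (ma mb : ℕ) :
    theta a ma - theta b mb =
      (((2 * (ma:ℤ) - 1) * 2 ^ (b - a) - (2 * (mb:ℤ) - 1) : ℤ) : ℝ) * π / 2 ^ b := by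
  have h2 : (2:ℝ) ^ a * (2:ℝ) ^ (b - a) = 2 ^ b := by
    rw [← pow_add]; congr 1; omega
  have ha : (0:ℝ) < 2 ^ a := by positivity
  have hbp : (0:ℝ) < 2 ^ b := by positivity
  have e1 : (2 * (ma:ℝ) - 1) * π / 2 ^ a
      = ((2 * (ma:ℝ) - 1) * 2 ^ (b - a)) * π / 2 ^ b := by
    rw [div_eq_div_iff ha.ne' hbp.ne']
    linear_combination (-(2 * (ma:ℝ) - 1)) * π * h2
  unfold theta
  push_cast
  rw [e1]
  ring

set_option maxHeartbeats 1000000 in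
/-- Lemma 16 (Gr_triangle): if three vertices of `G_r` on levels
`2 ≤ i ≤ j ≤ k ≤ r` are pairwise adjacent, then `k − j ≤ j − i + 6`. -/
theorem Gr_triangle (r i j k mi mj mk : ℕ) (hr : 2 ≤ r)
    (hi : 2 ≤ i) (hij : i ≤ j) (hjk : j ≤ k) (hkr : k ≤ r)
    (hmi : 1 ≤ mi ∧ mi ≤ 2 ^ i) (hmj : 1 ≤ mj ∧ mj ≤ 2 ^ j) (hmk : 1 ≤ mk ∧ mk ≤ 2 ^ k)
    (h₁ : (Gr r).Adj (some (i, mi)) (some (j, mj)))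
    (h₂ : (Gr r).Adj (some (i, mi)) (some (k, mk)))
    (h₃ : (Gr r).Adj (some (j, mj)) (some (k, mk))) :
    (k : ℤ) - (j : ℤ) ≤ (j : ℤ) - (i : ℤ) + 6 := by
  by_contra hcon
  push_neg at hcon
  have hik : 2 * j + 7 ≤ i + k := by omega
  have e2 : Real.cosh (rho r i) * Real.cosh (rho r k) -
      Real.sinh (rho r i) * Real.sinh (rho r k) * Real.cos (theta i mi - theta k mk)
        ≤ Real.cosh (2 * (r : ℝ)) := h₂.2
  have e3 : Real.cosh (rho r j) * Real.cosh (rho r k) -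
      Real.sinh (rho r j) * Real.sinh (rho r k) * Real.cos (theta j mj - theta k mk)
        ≤ Real.cosh (2 * (r : ℝ)) := h₃.2
  set A := (theta i mi - theta k mk) / 2 with hA_def
  set B := (theta j mj - theta k mk) / 2 with hB_def
  set σi := Real.sin (π / 2 ^ i) with hσi_def
  set σj := Real.sin (π / 2 ^ j) with hσj_def
  set σk := Real.sin (π / 2 ^ k) with hσk_def
  have hσi0 : 0 < σi := sigma_pos (by omega)
  have hσj0 : 0 < σj := sigma_pos (by omega)
  have hσk0 : 0 < σk := sigma_pos (by omega)
  have sA2 : Real.sin A ^ 2 ≤ σi * σk := adj_sin_sq mi mk (by omega) (by omega) (by omega) e2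
  have sB2 : Real.sin B ^ 2 ≤ σj * σk := adj_sin_sq mj mk (by omega) (by omega) (by omega) e3
  have hσji : σj ≤ σi := by
    apply Real.sin_le_sin_of_le_of_le_pi_div_two
    · have h0 : (0:ℝ) ≤ π / 2 ^ j := by positivity
      linarith [pi_pos]
    · have h1 : (2:ℝ) ≤ 2 ^ i := by
        calc (2:ℝ) = 2 ^ 1 := by norm_num
          _ ≤ 2 ^ i := pow_le_pow_right₀ one_le_two (by omega)
      rw [div_le_div_iff₀ (by positivity) (by norm_num : (0:ℝ) < 2)]
      nlinarith [pi_pos]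
    · apply div_le_div_of_nonneg_left pi_pos.le (by positivity)
      exact pow_le_pow_right₀ one_le_two hij
  have sB2' : Real.sin B ^ 2 ≤ σi * σk :=
    sB2.trans (mul_le_mul_of_nonneg_right hσji hσk0.le)
  set C := σi * σk with hC_def
  have hC0 : 0 ≤ C := (mul_pos hσi0 hσk0).le
  have hAle : |Real.sin A| ≤ Real.sqrt C := by
    rw [← Real.sqrt_sq_eq_abs]; exact Real.sqrt_le_sqrt sA2
  have hBle : |Real.sin B| ≤ Real.sqrt C := by
    rw [← Real.sqrt_sq_eq_abs]; exact Real.sqrt_le_sqrt sB2'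
  set Q : ℤ := (2 * (mi:ℤ) - 1) * 2 ^ (j - i) - (2 * (mj:ℤ) - 1) with hQ_def
  have hθij : theta i mi - theta j mj = (Q : ℝ) * π / 2 ^ j := theta_sub hij mi mj
  have hAB : A - B = (Q : ℝ) * π / 2 ^ (j + 1) := by
    have h1 : A - B = (theta i mi - theta j mj) / 2 := by rw [hA_def, hB_def]; ring
    rw [h1, hθij, pow_succ]
    ring
  have hndvd : ¬ ((2 ^ (j + 1) : ℤ) ∣ Q) := by
    rcases Nat.lt_or_ge i j with hlt | hge
    · have hodd : Odd Q := by
        obtain ⟨d, hd⟩ : ∃ d, j - i = d + 1 := ⟨j - i - 1, by omega⟩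
        refine ⟨(2 * (mi:ℤ) - 1) * 2 ^ d - mj, ?_⟩
        rw [hQ_def, hd]
        ring
      intro hdvd
      have h2 : (2:ℤ) ∣ Q := dvd_trans ⟨2 ^ j, by rw [pow_succ]; ring⟩ hdvd
      rw [Int.odd_iff] at hodd
      omega
    · have hieq : i = j := le_antisymm hij hge
      have hmne : mi ≠ mj := fun hmm => h₁.1 (by rw [hieq, hmm])
      have hQeq : Q = 2 * ((mi:ℤ) - mj) := by
        rw [hQ_def, show j - i = 0 by omega]; ring
      intro hdvd
      rw [hQeq, pow_succ] at hdvd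
      have hdvd2 : (2 ^ j : ℤ) ∣ ((mi:ℤ) - mj) := by
        rcases hdvd with ⟨c, hc⟩
        exact ⟨c, by linarith⟩
      have hb1 : (mi:ℤ) - mj ≠ 0 := by
        intro hh; apply hmne; omega
      have hge2 : (2 ^ j : ℤ) ≤ |(mi:ℤ) - mj| :=
        Int.le_of_dvd (abs_pos.2 hb1) ((dvd_abs _ _).2 hdvd2)
      have hmil : (mi:ℤ) ≤ 2 ^ j := by
        have h1 : mi ≤ 2 ^ j := by rw [← hieq]; exact hmi.2
        exact_mod_cast h1
      have hmjl : (mj:ℤ) ≤ 2 ^ j := by exact_mod_cast hmj.2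
      have hmi1 : (1:ℤ) ≤ mi := by exact_mod_cast hmi.1
      have hmj1 : (1:ℤ) ≤ mj := by exact_mod_cast hmj.1
      have habs : |(mi:ℤ) - mj| ≤ 2 ^ j - 1 :=
        abs_le.2 ⟨by linarith, by linarith⟩
      linarith
  have hndvd' : ¬ ((((2 ^ (j + 1) : ℕ) : ℤ)) ∣ Q) := by push_cast; exact hndvd
  have hlow : Real.sin (π / 2 ^ (j + 1)) ≤ |Real.sin (A - B)| := by
    have hhh := abs_sin_int_ge (n := 2 ^ (j + 1))
      (Nat.one_lt_two_pow_iff.2 (by omega)) hndvd'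
    have hcast : ((2 ^ (j + 1) : ℕ) : ℝ) = (2:ℝ) ^ (j + 1) := by push_cast; ring
    rw [hcast] at hhh
    rw [hAB]
    exact hhh
  have htri : |Real.sin (A - B)| ≤ |Real.sin A| + |Real.sin B| := by
    rw [Real.sin_sub]
    calc |Real.sin A * Real.cos B - Real.cos A * Real.sin B|
        ≤ |Real.sin A * Real.cos B| + |Real.cos A * Real.sin B| := abs_sub _ _
      _ ≤ |Real.sin A| + |Real.sin B| := by
          rw [abs_mul, abs_mul]
          have h1 := Real.abs_cos_le_one B
          have h2 := Real.abs_cos_le_one A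
          nlinarith [abs_nonneg (Real.sin A), abs_nonneg (Real.sin B),
            abs_nonneg (Real.cos A), abs_nonneg (Real.cos B)]
  have hmain : Real.sin (π / 2 ^ (j + 1)) ≤ 2 * Real.sqrt C := by
    calc Real.sin (π / 2 ^ (j + 1)) ≤ |Real.sin (A - B)| := hlow
      _ ≤ |Real.sin A| + |Real.sin B| := htri
      _ ≤ 2 * Real.sqrt C := by linarith
  have hLlb : (1:ℝ) / 2 ^ j ≤ Real.sin (π / 2 ^ (j + 1)) := by
    have hle : π / 2 ^ (j + 1) ≤ π / 2 := by
      apply div_le_div_of_nonneg_left pi_pos.le (by norm_num)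
      calc (2:ℝ) = 2 ^ 1 := by norm_num
        _ ≤ 2 ^ (j + 1) := pow_le_pow_right₀ one_le_two (by omega)
    have hms := Real.mul_le_sin (x := π / 2 ^ (j + 1)) (by positivity) hle
    have heq : 2 / π * (π / 2 ^ (j + 1)) = 1 / 2 ^ j := by
      rw [pow_succ]; field_simp
    rw [heq] at hms
    linarith
  have hsq : ((1:ℝ) / 2 ^ j) ^ 2 ≤ 4 * C := by
    have h1 : (1:ℝ) / 2 ^ j ≤ 2 * Real.sqrt C := hLlb.trans hmain
    have h2 : ((1:ℝ) / 2 ^ j) ^ 2 ≤ (2 * Real.sqrt C) ^ 2 :=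
      pow_le_pow_left₀ (by positivity) h1 2
    rw [mul_pow, Real.sq_sqrt hC0] at h2
    linarith
  have hCub : C ≤ (π / 2 ^ i) * (π / 2 ^ k) := by
    have hi1 : σi ≤ π / 2 ^ i := Real.sin_le (by positivity)
    have hk1 : σk ≤ π / 2 ^ k := Real.sin_le (by positivity)
    exact mul_le_mul hi1 hk1 hσk0.le (by positivity)
  have hX : (128:ℝ) * ((2:ℝ) ^ j) ^ 2 ≤ 2 ^ i * 2 ^ k := by
    have h1 : (2:ℝ) ^ (2 * j + 7) ≤ 2 ^ (i + k) := pow_le_pow_right₀ one_le_two hik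
    have h2 : (2:ℝ) ^ (2 * j + 7) = 128 * ((2:ℝ) ^ j) ^ 2 := by
      rw [show 2 * j + 7 = j * 2 + 7 by ring, pow_add, pow_mul]
      norm_num
      ring
    have h3 : (2:ℝ) ^ (i + k) = 2 ^ i * 2 ^ k := pow_add 2 i k
    rw [← h2, ← h3]
    exact h1
  have hpi2 : π ^ 2 ≤ 16 := by
    have h16 := pow_le_pow_left₀ Real.pi_pos.le Real.pi_le_four 2
    norm_num at h16
    exact h16
  have hij2 : ((1:ℝ) / 2 ^ j) ^ 2 ≤ 4 * (π / 2 ^ i) * (π / 2 ^ k) := by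
    calc ((1:ℝ) / 2 ^ j) ^ 2 ≤ 4 * C := hsq
      _ ≤ 4 * ((π / 2 ^ i) * (π / 2 ^ k)) := by linarith [hCub]
      _ = 4 * (π / 2 ^ i) * (π / 2 ^ k) := by ring
  have h2i : (0:ℝ) < 2 ^ i := by positivity
  have h2j : (0:ℝ) < 2 ^ j := by positivity
  have h2k : (0:ℝ) < 2 ^ k := by positivity
  have hfin : (128:ℝ) * (2 ^ j) ^ 2 ≤ 4 * π ^ 2 * (2 ^ j) ^ 2 := by
    have hmul := mul_le_mul_of_nonneg_left hij2
      (le_of_lt (by positivity : (0:ℝ) < 2 ^ i * 2 ^ k * (2 ^ j) ^ 2))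
    have hl : 2 ^ i * 2 ^ k * (2 ^ j) ^ 2 * (((1:ℝ) / 2 ^ j) ^ 2)
        = 2 ^ i * 2 ^ k := by field_simp
    have hrr : 2 ^ i * 2 ^ k * (2 ^ j) ^ 2 * (4 * (π / 2 ^ i) * (π / 2 ^ k))
        = 4 * π ^ 2 * (2 ^ j) ^ 2 := by field_simp
    rw [hl, hrr] at hmul
    linarith [hX]
  have hstep : 4 * π ^ 2 * ((2:ℝ) ^ j) ^ 2 ≤ 64 * ((2:ℝ) ^ j) ^ 2 :=
    mul_le_mul_of_nonneg_right (by linarith) (sq_nonneg _)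
  have hX2 : (0:ℝ) < ((2:ℝ) ^ j) ^ 2 := by positivity
  linarith [hfin, hstep]
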